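/- On the open quadrant Ω = {(x,y) ∈ ℝ² : x > 0, y > 0}, the data q(x,y) = √(x+y), A(x) = x, B(y) = y, Sˣ(x,y) = Sʸ(x,y) = (1/2)·log(x+y), and λ = 1/2 satisfies the full reduced soliton system: (E1) ∂_y Sˣ + ∂_x Sʸ = 4 q_x q_y; (E2) ∂_x Sˣ = 2 q_x²; (E3) ∂_y Sʸ = 2 q_y²; (E4) A''(x) − (Sˣ/q²) A'(x) = B''(y) − (Sʸ/q²) B'(y) (common value denoted w); (E5) −λ/q² = (1/2) w − (q_x A' + q_xx A + q_y B' + q_yy B)/q + (q_x² A + q_y² B)/q² + (Sˣ q_x A + Sʸ q_y B)/q³. -/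

import Mathlib

open Real Set

/-- Partial derivative in the first variable. -/
noncomputable def px (f : ℝ × ℝ → ℝ) : ℝ × ℝ → ℝ :=
  fun p => deriv (fun t => f (t, p.2)) p.1

/-- Partial derivative in the second variable. -/
noncomputable def py (f : ℝ × ℝ → ℝ) : ℝ × ℝ → ℝ :=
  fun p => deriv (fun t => f (p.1, t)) p.2

private lemma ds1 (y : ℝ) {x : ℝ} (h : 0 < x + y) :
    HasDerivAt (fun t => Real.sqrt (t + y)) (1 / (2 * Real.sqrt (x + y))) x := by
  have := (Real.hasDerivAt_sqrt (ne_of_gt h)).comp x ((hasDerivAt_id x).add_const y)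
  simpa [Function.comp_def] using this

private lemma ds2 (x : ℝ) {y : ℝ} (h : 0 < x + y) :
    HasDerivAt (fun t => Real.sqrt (x + t)) (1 / (2 * Real.sqrt (x + y))) y := by
  have := (Real.hasDerivAt_sqrt (ne_of_gt h)).comp y ((hasDerivAt_id y).const_add x)
  simpa [Function.comp_def] using this

private lemma dlog1 (y : ℝ) {x : ℝ} (h : 0 < x + y) :
    HasDerivAt (fun t => (1 / 2) * Real.log (t + y)) (1 / (2 * (x + y))) x := by
  have := ((Real.hasDerivAt_log (ne_of_gt h)).comp x
    ((hasDerivAt_id x).add_const y)).const_mul (1 / 2 : ℝ)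
  simpa [one_div] using this.congr_deriv (by field_simp)

private lemma dlog2 (x : ℝ) {y : ℝ} (h : 0 < x + y) :
    HasDerivAt (fun t => (1 / 2) * Real.log (x + t)) (1 / (2 * (x + y))) y := by
  have := ((Real.hasDerivAt_log (ne_of_gt h)).comp y
    ((hasDerivAt_id y).const_add x)).const_mul (1 / 2 : ℝ)
  simpa [one_div] using this.congr_deriv (by field_simp)

private lemma dinvsqrt1 (y : ℝ) {x : ℝ} (h : 0 < x + y) :
    HasDerivAt (fun t => 1 / (2 * Real.sqrt (t + y)))
      (-(1 / (4 * (x + y) * Real.sqrt (x + y)))) x := by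
  have hs : (0:ℝ) < Real.sqrt (x + y) := Real.sqrt_pos.mpr h
  have h1 := ((ds1 y h).inv hs.ne').const_mul (1 / 2 : ℝ)
  have hfun : (fun t => 1 / (2 * Real.sqrt (t + y)))
      = fun t => (1 / 2) * (Real.sqrt (t + y))⁻¹ := by funext t; ring
  rw [hfun]
  have hsq : Real.sqrt (x + y) * Real.sqrt (x + y) = x + y := Real.mul_self_sqrt h.le
  refine h1.congr_deriv ?_
  field_simp
  nlinarith [hs, hsq]

private lemma dinvsqrt2 (x : ℝ) {y : ℝ} (h : 0 < x + y) :
    HasDerivAt (fun t => 1 / (2 * Real.sqrt (x + t)))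
      (-(1 / (4 * (x + y) * Real.sqrt (x + y)))) y := by
  have hs : (0:ℝ) < Real.sqrt (x + y) := Real.sqrt_pos.mpr h
  have h1 := ((ds2 x h).inv hs.ne').const_mul (1 / 2 : ℝ)
  have hfun : (fun t => 1 / (2 * Real.sqrt (x + t)))
      = fun t => (1 / 2) * (Real.sqrt (x + t))⁻¹ := by funext t; ring
  rw [hfun]
  have hsq : Real.sqrt (x + y) * Real.sqrt (x + y) = x + y := Real.mul_self_sqrt h.le
  refine h1.congr_deriv ?_
  field_simp
  nlinarith [hs, hsq]

/-- the data `q = √(x+y)`, `A(x) = x`, `B(y) = y`,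
`Sˣ = Sʸ = (1/2) log(x+y)`, `λ = 1/2` satisfies the full reduced soliton system on the
open quadrant `{x > 0, y > 0}`. -/
theorem singular_shrinker_q_sqrt_x_plus_y
    (q Sx Sy : ℝ × ℝ → ℝ) (A B : ℝ → ℝ) (lam : ℝ)
    (hq : ∀ p : ℝ × ℝ, q p = Real.sqrt (p.1 + p.2))
    (hA : ∀ x : ℝ, A x = x)
    (hB : ∀ y : ℝ, B y = y)
    (hSx : ∀ p : ℝ × ℝ, Sx p = (1 / 2) * Real.log (p.1 + p.2))
    (hSy : ∀ p : ℝ × ℝ, Sy p = (1 / 2) * Real.log (p.1 + p.2))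
    (hlam : lam = 1 / 2) :
    ∀ p : ℝ × ℝ, 0 < p.1 → 0 < p.2 →
      (py Sx p + px Sy p = 4 * px q p * py q p) ∧
      (px Sx p = 2 * (px q p) ^ 2) ∧
      (py Sy p = 2 * (py q p) ^ 2) ∧
      (deriv (deriv A) p.1 - Sx p / (q p) ^ 2 * deriv A p.1 =
        deriv (deriv B) p.2 - Sy p / (q p) ^ 2 * deriv B p.2) ∧
      (-(lam / (q p) ^ 2) =
        (1 / 2) * (deriv (deriv A) p.1 - Sx p / (q p) ^ 2 * deriv A p.1)
        - (px q p * deriv A p.1 + px (px q) p * A p.1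
            + py q p * deriv B p.2 + py (py q) p * B p.2) / q p
        + ((px q p) ^ 2 * A p.1 + (py q p) ^ 2 * B p.2) / (q p) ^ 2
        + (Sx p * px q p * A p.1 + Sy p * py q p * B p.2) / (q p) ^ 3) := by
  intro p hx hy
  obtain ⟨x, y⟩ := p
  simp only at hx hy ⊢
  have hu : 0 < x + y := by linarith
  have hs : (0:ℝ) < Real.sqrt (x + y) := Real.sqrt_pos.mpr hu
  have hsq : Real.sqrt (x + y) * Real.sqrt (x + y) = x + y := Real.mul_self_sqrt hu.le
  -- A, B as id
  have hAid : A = fun t => t := funext hA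
  have hBid : B = fun t => t := funext hB
  have hdA : deriv A = fun _ => (1:ℝ) := by funext t; rw [hAid]; simp
  have hdB : deriv B = fun _ => (1:ℝ) := by funext t; rw [hBid]; simp
  have hddA : deriv (deriv A) x = 0 := by rw [hdA]; simp
  have hddB : deriv (deriv B) y = 0 := by rw [hdB]; simp
  -- first derivatives of q
  have hqx : px q (x, y) = 1 / (2 * Real.sqrt (x + y)) := by
    have : (fun t => q (t, y)) = fun t => Real.sqrt (t + y) := by
      funext t; simp [hq]
    simp only [px, this]
    exact (ds1 y hu).deriv
  have hqy : py q (x, y) = 1 / (2 * Real.sqrt (x + y)) := by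
    have : (fun t => q (x, t)) = fun t => Real.sqrt (x + t) := by
      funext t; simp [hq]
    simp only [py, this]
    exact (ds2 x hu).deriv
  -- derivatives of Sx, Sy
  have hSxx : px Sx (x, y) = 1 / (2 * (x + y)) := by
    have : (fun t => Sx (t, y)) = fun t => (1/2) * Real.log (t + y) := by
      funext t; simp [hSx]
    simp only [px, this]
    exact (dlog1 y hu).deriv
  have hSxy : py Sx (x, y) = 1 / (2 * (x + y)) := by
    have : (fun t => Sx (x, t)) = fun t => (1/2) * Real.log (x + t) := by
      funext t; simp [hSx]
    simp only [py, this]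
    exact (dlog2 x hu).deriv
  have hSyx : px Sy (x, y) = 1 / (2 * (x + y)) := by
    have : (fun t => Sy (t, y)) = fun t => (1/2) * Real.log (t + y) := by
      funext t; simp [hSy]
    simp only [px, this]
    exact (dlog1 y hu).deriv
  have hSyy : py Sy (x, y) = 1 / (2 * (x + y)) := by
    have : (fun t => Sy (x, t)) = fun t => (1/2) * Real.log (x + t) := by
      funext t; simp [hSy]
    simp only [py, this]
    exact (dlog2 x hu).deriv
  -- second derivatives of q
  have hqxx : px (px q) (x, y) = -(1 / (4 * (x + y) * Real.sqrt (x + y))) := by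
    have hev : (fun t => px q (t, y)) =ᶠ[nhds x] fun t => 1 / (2 * Real.sqrt (t + y)) := by
      have hop : ∀ᶠ t in nhds x, 0 < t + y := by
        have : IsOpen {t : ℝ | 0 < t + y} :=
          isOpen_lt continuous_const (continuous_id.add continuous_const)
        exact this.mem_nhds (by simpa using hu)
      filter_upwards [hop] with t ht
      have : (fun s => q (s, y)) = fun s => Real.sqrt (s + y) := by
        funext s; simp [hq]
      simp only [px, this]
      exact (ds1 y ht).deriv
    rw [show px (px q) (x, y) = deriv (fun t => px q (t, y)) x from rfl, hev.deriv_eq]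
    exact (dinvsqrt1 y hu).deriv
  have hqyy : py (py q) (x, y) = -(1 / (4 * (x + y) * Real.sqrt (x + y))) := by
    have hev : (fun t => py q (x, t)) =ᶠ[nhds y] fun t => 1 / (2 * Real.sqrt (x + t)) := by
      have hop : ∀ᶠ t in nhds y, 0 < x + t := by
        have : IsOpen {t : ℝ | 0 < x + t} :=
          isOpen_lt continuous_const (continuous_const.add continuous_id)
        exact this.mem_nhds (by simpa using hu)
      filter_upwards [hop] with t ht
      have : (fun s => q (x, s)) = fun s => Real.sqrt (x + s) := by
        funext s; simp [hq]
      simp only [py, this]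
      exact (ds2 x ht).deriv
    rw [show py (py q) (x, y) = deriv (fun t => py q (x, t)) y from rfl, hev.deriv_eq]
    exact (dinvsqrt2 x hu).deriv
  rw [hq, hSx, hSy, hA, hB, hlam] at *
  simp only at *
  rw [hqx, hqy, hSxx, hSxy, hSyx, hSyy, hqxx, hqyy, hddA, hddB, hdA, hdB]
  refine ⟨?_, ?_, ?_, rfl, ?_⟩
  · field_simp
    nlinarith [hsq]
  · field_simp
    nlinarith [hsq]
  · field_simp
    nlinarith [hsq]
  · set s := Real.sqrt (x + y) with hsdef
    set L := Real.log (x + y) with hLdef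
    clear_value s L
    clear hsdef hLdef hqx hqy hSxx hSxy hSyx hSyy hqxx hqyy hddA hddB hdA hdB hAid hBid hq hA hB hSx hSy hx hy
    have hy2 : y = s * s - x := by linarith
    subst hy2
    have hs0 : s ≠ 0 := hs.ne'
    field_simp
    ring
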